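/- For any size function ρ on a set E, the monk operation is idempotent: (ρ°)°(A) = ρ°(A) for all subsets A of E. -/

import Mathlib

open scoped ENNReal

/-- A bornology on `E`, as a collection of "bounded" sets. -/
def IsBornology {E : Type*} (B : Set (Set E)) : Prop :=
  (∀ x : E, ∃ b ∈ B, x ∈ b) ∧
  (∀ b ∈ B, ∀ b' ∈ B, b ∪ b' ∈ B) ∧
  (∀ b b' : Set E, b ⊆ b' → b' ∈ B → b ∈ B)

/-- `ρ` is a size function. -/
def IsSizeFunction {E : Type*} (ρ : Set E → ℝ≥0∞) : Prop :=
  ρ ∅ = 0 ∧ (∀ x : E, ρ {x} < ⊤) ∧ (∀ A A' : Set E, A ⊆ A' → ρ A ≤ ρ A')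

/-- The monk of a size function. -/
noncomputable def monk {E : Type*} (ρ : Set E → ℝ≥0∞) (A : Set E) : ℝ≥0∞ :=
  sInf {t : ℝ≥0∞ | 0 < t ∧ ∃ S : Finset (Set E), (A ⊆ ⋃ s ∈ S, s) ∧ ∀ s ∈ S, ρ s ≤ t}

/-- The outer regularization `ρ⁺`. -/
noncomputable def sizePlus {E : Type*} [TopologicalSpace E] (ρ : Set E → ℝ≥0∞) (A : Set E) : ℝ≥0∞ :=
  ⨅ (G : Set E) (_ : IsOpen G) (_ : A ⊆ G), ρ G

theorem stmt9 {E : Type*} (ρ : Set E → ℝ≥0∞) (hρ : IsSizeFunction ρ) :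
    ∀ A : Set E, monk (monk ρ) A = monk ρ A := by
  classical
  have hmonk_le : ∀ B : Set E, monk ρ B ≤ ρ B := by
    intro B
    have key : ∀ t : ℝ≥0∞, 0 < t → ρ B ≤ t → monk ρ B ≤ t := by
      intro t ht hBt
      apply sInf_le
      exact ⟨ht, {B}, by simp, by simpa using hBt⟩
    rcases eq_or_lt_of_le (zero_le : (0:ℝ≥0∞) ≤ ρ B) with h0 | h0
    · refine le_of_forall_gt_imp_ge_of_dense fun c hc => key c ?_ ?_
      · exact lt_of_le_of_lt zero_le (h0 ▸ hc)
      · exact le_of_lt (h0 ▸ hc)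
    · exact key _ h0 le_rfl
  intro A
  apply le_antisymm
  · apply sInf_le_sInf
    rintro t ⟨ht, S, hcov, hS⟩
    exact ⟨ht, S, hcov, fun s hs => le_trans (hmonk_le s) (hS s hs)⟩
  · apply le_sInf
    rintro t ⟨ht, S, hcov, hS⟩
    refine le_of_forall_gt_imp_ge_of_dense fun t' ht' => ?_
    have hx : ∀ s ∈ S, ∃ T : Finset (Set E), (s ⊆ ⋃ u ∈ T, u) ∧ ∀ u ∈ T, ρ u ≤ t' := by
      intro s hs
      have h1 : monk ρ s < t' := lt_of_le_of_lt (hS s hs) ht'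
      rw [monk, sInf_lt_iff] at h1
      obtain ⟨u, ⟨hu0, T, hTcov, hTle⟩, hu⟩ := h1
      exact ⟨T, hTcov, fun v hv => (hTle v hv).trans hu.le⟩
    choose T hT1 hT2 using hx
    apply sInf_le
    refine ⟨ht.trans ht', S.attach.biUnion (fun s => T s.1 s.2), ?_, ?_⟩
    · intro x hxA
      obtain ⟨s, hs⟩ := Set.mem_iUnion₂.1 (hcov hxA)
      obtain ⟨hsS, hxs⟩ := hs
      obtain ⟨u, hu, hxu⟩ := Set.mem_iUnion₂.1 (hT1 s hsS hxs)
      refine Set.mem_iUnion₂.2 ⟨u, ?_, hxu⟩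
      exact Finset.mem_biUnion.2 ⟨⟨s, hsS⟩, Finset.mem_attach _ _, hu⟩
    · intro u hu
      obtain ⟨⟨s, hsS⟩, _, hu'⟩ := Finset.mem_biUnion.1 hu
      exact hT2 s hsS u hu'
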